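/- Let A₁ and A₂ be n×n real symmetric matrices, and let μ₁, μ₂ > 0 be such that A₁ − μ₁² I_n and A₂ − μ₂² I_n are positive semidefinite. Then A₁ and A₂ are positive definite, their principal square roots satisfy A_j^{1/2} − μ_j I_n positive semidefinite for j = 1, 2, and ‖A₂^{1/2} − A₁^{1/2}‖₂ ≤ ‖A₂ − A₁‖₂ / (μ₁ + μ₂). -/

import Mathlib

open Matrix

/-- The spectral norm (largest singular value) of a real square matrix. -/
noncomputable def specNorm {n : ℕ} (M : Matrix (Fin n) (Fin n) ℝ) : ℝ :=
  ⨆ i, Real.sqrt ((Matrix.isHermitian_conjTranspose_mul_self M).eigenvalues i)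

/-- The square root of a positive semidefinite matrix (old Mathlib `Matrix.PosSemidef.sqrt`). -/
noncomputable def Matrix.PosSemidef.sqrt {n : Type*} [Fintype n] [DecidableEq n]
    {A : Matrix n n ℝ} (hA : A.PosSemidef) : Matrix n n ℝ :=
  (hA.1.eigenvectorUnitary : Matrix n n ℝ) * diagonal (Real.sqrt ∘ hA.1.eigenvalues) *
    (star (hA.1.eigenvectorUnitary : Matrix n n ℝ))

lemma Matrix.PosSemidef.posSemidef_sqrt {n : Type*} [Fintype n] [DecidableEq n]
    {A : Matrix n n ℝ} (hA : A.PosSemidef) : hA.sqrt.PosSemidef := by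
  unfold Matrix.PosSemidef.sqrt
  exact (posSemidef_diagonal_iff.mpr fun i => Real.sqrt_nonneg _).mul_mul_conjTranspose_same _

lemma Matrix.PosSemidef.sq_sqrt {n : Type*} [Fintype n] [DecidableEq n]
    {A : Matrix n n ℝ} (hA : A.PosSemidef) : hA.sqrt ^ 2 = A := by
  have hU : star (hA.1.eigenvectorUnitary : Matrix n n ℝ) * (hA.1.eigenvectorUnitary : Matrix n n ℝ)
      = 1 := Unitary.coe_star_mul_self hA.1.eigenvectorUnitary
  have hD : diagonal (Real.sqrt ∘ hA.1.eigenvalues) * diagonal (Real.sqrt ∘ hA.1.eigenvalues) =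
      diagonal (RCLike.ofReal ∘ hA.1.eigenvalues) := by
    rw [diagonal_mul_diagonal]
    congr 1
    funext i
    simp [Real.mul_self_sqrt (hA.eigenvalues_nonneg i)]
  unfold Matrix.PosSemidef.sqrt
  rw [pow_two]
  calc _ = (hA.1.eigenvectorUnitary : Matrix n n ℝ) * (diagonal (Real.sqrt ∘ hA.1.eigenvalues) *
        (star (hA.1.eigenvectorUnitary : Matrix n n ℝ) * (hA.1.eigenvectorUnitary : Matrix n n ℝ)) *
        diagonal (Real.sqrt ∘ hA.1.eigenvalues)) * star (hA.1.eigenvectorUnitary : Matrix n n ℝ) := by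
          simp only [Matrix.mul_assoc]
    _ = A := by
      rw [hU, Matrix.mul_one, hD]
      exact hA.1.spectral_theorem.symm

namespace SqrtPerturbAux

variable {n : ℕ}

lemma sub_smul_one_posSemidef {H : Matrix (Fin n) (Fin n) ℝ} (hH : H.IsHermitian) {c : ℝ}
    (h : ∀ i, c ≤ hH.eigenvalues i) : (H - c • 1).PosSemidef := by
  have hU : (hH.eigenvectorUnitary : Matrix (Fin n) (Fin n) ℝ) *
      star (hH.eigenvectorUnitary : Matrix (Fin n) (Fin n) ℝ) = 1 :=
    Matrix.mem_unitaryGroup_iff.mp hH.eigenvectorUnitary.2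
  have hdiag : diagonal (fun i : Fin n => hH.eigenvalues i - c) =
      diagonal (RCLike.ofReal ∘ hH.eigenvalues) - c • (1 : Matrix (Fin n) (Fin n) ℝ) := by
    rw [smul_one_eq_diagonal, ← diagonal_sub]
    rfl
  have key : H - c • 1 =
      (hH.eigenvectorUnitary : Matrix (Fin n) (Fin n) ℝ) *
        diagonal (fun i : Fin n => hH.eigenvalues i - c) *
        star (hH.eigenvectorUnitary : Matrix (Fin n) (Fin n) ℝ) := by
    rw [hdiag, mul_sub, sub_mul, mul_smul_comm, smul_mul_assoc, Matrix.mul_one, hU]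
    exact congrArg (· - c • (1 : Matrix (Fin n) (Fin n) ℝ)) hH.spectral_theorem
  rw [key]
  exact (posSemidef_diagonal_iff.mpr fun i => sub_nonneg.mpr (h i)).mul_mul_conjTranspose_same _

lemma smul_one_sub_posSemidef {H : Matrix (Fin n) (Fin n) ℝ} (hH : H.IsHermitian) {c : ℝ}
    (h : ∀ i, hH.eigenvalues i ≤ c) : (c • 1 - H).PosSemidef := by
  have hU : (hH.eigenvectorUnitary : Matrix (Fin n) (Fin n) ℝ) *
      star (hH.eigenvectorUnitary : Matrix (Fin n) (Fin n) ℝ) = 1 :=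
    Matrix.mem_unitaryGroup_iff.mp hH.eigenvectorUnitary.2
  have hdiag : diagonal (fun i : Fin n => c - hH.eigenvalues i) =
      c • (1 : Matrix (Fin n) (Fin n) ℝ) - diagonal (RCLike.ofReal ∘ hH.eigenvalues) := by
    rw [smul_one_eq_diagonal, ← diagonal_sub]
    rfl
  have key : c • 1 - H =
      (hH.eigenvectorUnitary : Matrix (Fin n) (Fin n) ℝ) *
        diagonal (fun i : Fin n => c - hH.eigenvalues i) *
        star (hH.eigenvectorUnitary : Matrix (Fin n) (Fin n) ℝ) := by
    rw [hdiag, mul_sub, sub_mul, mul_smul_comm, smul_mul_assoc, Matrix.mul_one, hU]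
    exact congrArg (c • (1 : Matrix (Fin n) (Fin n) ℝ) - ·) hH.spectral_theorem
  rw [key]
  exact (posSemidef_diagonal_iff.mpr fun i => sub_nonneg.mpr (h i)).mul_mul_conjTranspose_same _

lemma le_specNorm (M : Matrix (Fin n) (Fin n) ℝ) (i : Fin n) :
    Real.sqrt ((Matrix.isHermitian_conjTranspose_mul_self M).eigenvalues i) ≤ specNorm M := by
  unfold specNorm
  exact le_ciSup (Set.Finite.bddAbove (Set.finite_range
    (fun j => Real.sqrt ((Matrix.isHermitian_conjTranspose_mul_self M).eigenvalues j)))) i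

lemma specNorm_nonneg (M : Matrix (Fin n) (Fin n) ℝ) : 0 ≤ specNorm M := by
  cases isEmpty_or_nonempty (Fin n) with
  | inl h => simp [specNorm, Real.iSup_of_isEmpty]
  | inr h => exact le_trans (Real.sqrt_nonneg _) (le_specNorm M (Classical.arbitrary _))

lemma star_eq_self (x : Fin n → ℝ) : star x = x := by
  funext i; simp

/-- Quadratic form bound: `‖M x‖² ≤ ‖M‖² ‖x‖²`. -/
lemma mulVec_dot_le (M : Matrix (Fin n) (Fin n) ℝ) (x : Fin n → ℝ) :
    (M *ᵥ x) ⬝ᵥ (M *ᵥ x) ≤ specNorm M ^ 2 * (x ⬝ᵥ x) := by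
  have hH := Matrix.isHermitian_conjTranspose_mul_self M
  have heig : ∀ i, hH.eigenvalues i ≤ specNorm M ^ 2 := by
    intro i
    have h0 : 0 ≤ hH.eigenvalues i :=
      (Matrix.posSemidef_conjTranspose_mul_self M).eigenvalues_nonneg i
    calc hH.eigenvalues i = Real.sqrt (hH.eigenvalues i) ^ 2 := (Real.sq_sqrt h0).symm
      _ ≤ specNorm M ^ 2 := pow_le_pow_left₀ (Real.sqrt_nonneg _) (le_specNorm M i) 2
  have hpsd := smul_one_sub_posSemidef hH heig
  have h := hpsd.dotProduct_mulVec_nonneg x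
  rw [star_eq_self, Matrix.sub_mulVec, dotProduct_sub, smul_mulVec, one_mulVec,
    dotProduct_smul] at h
  have hdot : x ⬝ᵥ ((Mᴴ * M) *ᵥ x) = (M *ᵥ x) ⬝ᵥ (M *ᵥ x) := by
    rw [← mulVec_mulVec, dotProduct_mulVec, vecMul_conjTranspose, star_eq_self, star_eq_self]
  rw [hdot] at h
  have := sub_nonneg.mp h
  simpa [smul_eq_mul] using this

lemma dot_sq_le (x y : Fin n → ℝ) : (x ⬝ᵥ y) ^ 2 ≤ (x ⬝ᵥ x) * (y ⬝ᵥ y) := by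
  simpa [dotProduct, sq] using Finset.sum_mul_sq_le_sq_mul_sq Finset.univ x y

lemma transpose_eq_self {X : Matrix (Fin n) (Fin n) ℝ} (hX : X.IsHermitian) : Xᵀ = X := by
  ext i j
  have := congrFun (congrFun hX i) j
  simpa [Matrix.conjTranspose_apply] using this

/-- Central estimate: if `X w = l • w`, `w ≠ 0`, `D = S₂ X + X S₁`, `Sⱼ ≥ μⱼ`, then
`|l| (μ₁ + μ₂) ≤ ‖D‖`. -/
lemma eigen_bound {X D S₁ S₂ : Matrix (Fin n) (Fin n) ℝ} (hX : X.IsHermitian)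
    (hD : D = S₂ * X + X * S₁) {μ₁ μ₂ : ℝ} (hμ₁ : 0 ≤ μ₁) (hμ₂ : 0 ≤ μ₂)
    (h₁ : (S₁ - μ₁ • 1).PosSemidef) (h₂ : (S₂ - μ₂ • 1).PosSemidef)
    {w : Fin n → ℝ} (hw : w ≠ 0) {l : ℝ} (hl : X *ᵥ w = l • w) :
    |l| * (μ₁ + μ₂) ≤ specNorm D := by
  set q : ℝ := w ⬝ᵥ w with hq_def
  have hq : 0 < q := by
    have := dotProduct_star_self_pos_iff.mpr hw
    rwa [star_eq_self] at this
  have hp : ∀ (S : Matrix (Fin n) (Fin n) ℝ) (μ : ℝ), (S - μ • 1).PosSemidef →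
      μ * q ≤ w ⬝ᵥ (S *ᵥ w) := by
    intro S μ hS
    have h := hS.dotProduct_mulVec_nonneg w
    rw [star_eq_self, Matrix.sub_mulVec, dotProduct_sub, smul_mulVec, one_mulVec,
      dotProduct_smul, smul_eq_mul] at h
    linarith [sub_nonneg.mp h]
  have hp₁ := hp S₁ μ₁ h₁
  have hp₂ := hp S₂ μ₂ h₂
  set d : ℝ := w ⬝ᵥ (D *ᵥ w) with hd_def
  have hd : d = l * (w ⬝ᵥ (S₂ *ᵥ w) + w ⬝ᵥ (S₁ *ᵥ w)) := by
    have hterm2 : w ⬝ᵥ ((X * S₁) *ᵥ w) = l * (w ⬝ᵥ (S₁ *ᵥ w)) := by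
      rw [← mulVec_mulVec, dotProduct_mulVec]
      have hw' : w ᵥ* X = l • w := by
        rw [← transpose_eq_self hX, vecMul_transpose, hl]
      rw [hw', smul_dotProduct, smul_eq_mul]
    have hterm1 : w ⬝ᵥ ((S₂ * X) *ᵥ w) = l * (w ⬝ᵥ (S₂ *ᵥ w)) := by
      rw [← mulVec_mulVec, hl, mulVec_smul, dotProduct_smul, smul_eq_mul]
    rw [hd_def, hD, add_mulVec, dotProduct_add, hterm1, hterm2]
    ring
  set P : ℝ := w ⬝ᵥ (S₂ *ᵥ w) + w ⬝ᵥ (S₁ *ᵥ w) with hP_def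
  have hP : (μ₁ + μ₂) * q ≤ P := by rw [hP_def]; linarith
  have hPnonneg : 0 ≤ P := le_trans (by positivity) hP
  have habs : |l| * ((μ₁ + μ₂) * q) ≤ |d| := by
    rw [hd, abs_mul, abs_of_nonneg hPnonneg]
    exact mul_le_mul_of_nonneg_left hP (abs_nonneg l)
  have hDb := mulVec_dot_le D w
  have hcs := dot_sq_le w (D *ᵥ w)
  have hd2 : d ^ 2 ≤ (specNorm D * q) ^ 2 := by
    calc d ^ 2 ≤ q * ((D *ᵥ w) ⬝ᵥ (D *ᵥ w)) := hcs
      _ ≤ q * (specNorm D ^ 2 * q) := mul_le_mul_of_nonneg_left hDb hq.le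
      _ = (specNorm D * q) ^ 2 := by ring
  have habs2 : |d| ≤ specNorm D * q := by
    have h1 : Real.sqrt (d ^ 2) ≤ Real.sqrt ((specNorm D * q) ^ 2) := Real.sqrt_le_sqrt hd2
    rwa [Real.sqrt_sq_eq_abs, Real.sqrt_sq (mul_nonneg (specNorm_nonneg D) hq.le)] at h1
  have hfinal : |l| * (μ₁ + μ₂) * q ≤ specNorm D * q := by
    calc |l| * (μ₁ + μ₂) * q = |l| * ((μ₁ + μ₂) * q) := by ring
      _ ≤ |d| := habs
      _ ≤ specNorm D * q := habs2
  exact le_of_mul_le_mul_right hfinal hq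

/-- Every singular value of a Hermitian `X` is realized as `|l|` for an eigenpair `(w, l)`. -/
lemma exists_eigen (X : Matrix (Fin n) (Fin n) ℝ) (hX : X.IsHermitian) (i : Fin n) :
    ∃ (w : Fin n → ℝ) (l : ℝ), w ≠ 0 ∧ X *ᵥ w = l • w ∧
      |l| = Real.sqrt ((Matrix.isHermitian_conjTranspose_mul_self X).eigenvalues i) := by
  set hH := Matrix.isHermitian_conjTranspose_mul_self X with hH_def
  set t := hH.eigenvalues i with ht_def
  have ht : 0 ≤ t := (Matrix.posSemidef_conjTranspose_mul_self X).eigenvalues_nonneg i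
  set v : Fin n → ℝ := ⇑(hH.eigenvectorBasis i) with hv_def
  have hv : (Xᴴ * X) *ᵥ v = t • v := hH.mulVec_eigenvectorBasis i
  have hvne : v ≠ 0 := by
    intro h
    exact hH.eigenvectorBasis.orthonormal.ne_zero i (by ext j; exact congrFun h j)
  have hv' : (X * X) *ᵥ v = t • v := by rwa [hX.eq] at hv
  have hXX : X *ᵥ (X *ᵥ v) = t • v := by rw [mulVec_mulVec]; exact hv'
  set s := Real.sqrt t with hs_def
  have hss : s * s = t := Real.mul_self_sqrt ht
  set u : Fin n → ℝ := s • v + X *ᵥ v with hu_def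
  have hXu : X *ᵥ u = s • u := by
    rw [hu_def, mulVec_add, mulVec_smul, hXX, smul_add, smul_smul, hss]
    abel
  by_cases hu : u = 0
  · refine ⟨v, -s, hvne, ?_, by rw [abs_neg, abs_of_nonneg (Real.sqrt_nonneg t)]⟩
    have h0 : s • v + X *ᵥ v = 0 := by rw [← hu_def, hu]
    rw [neg_smul]
    exact eq_neg_of_add_eq_zero_right h0
  · exact ⟨u, s, hu, hXu, abs_of_nonneg (Real.sqrt_nonneg t)⟩

/-- If `A ≥ μ² I` (and `A` posdef), then `√A ≥ μ I`. -/
lemma sqrt_ge {A : Matrix (Fin n) (Fin n) ℝ} (hA : A.PosDef) {μ : ℝ} (hμ : 0 ≤ μ)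
    (h : (A - (μ ^ 2) • 1).PosSemidef) :
    (hA.posSemidef.sqrt - μ • 1).PosSemidef := by
  set S := hA.posSemidef.sqrt with hS_def
  have hS : S.PosSemidef := hA.posSemidef.posSemidef_sqrt
  have hSS : S * S = A := by
    have := hA.posSemidef.sq_sqrt
    rwa [pow_two] at this
  apply sub_smul_one_posSemidef hS.1
  intro i
  set l := hS.1.eigenvalues i with hl_def
  have hl0 : 0 ≤ l := hS.eigenvalues_nonneg i
  set v : Fin n → ℝ := ⇑(hS.1.eigenvectorBasis i) with hv_def
  have hv : S *ᵥ v = l • v := hS.1.mulVec_eigenvectorBasis i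
  have hvne : v ≠ 0 := by
    intro hz
    exact hS.1.eigenvectorBasis.orthonormal.ne_zero i (by ext j; exact congrFun hz j)
  have hq : 0 < v ⬝ᵥ v := by
    have := dotProduct_star_self_pos_iff.mpr hvne
    rwa [star_eq_self] at this
  have hAv : A *ᵥ v = (l * l) • v := by
    rw [← hSS, ← mulVec_mulVec, hv, mulVec_smul, hv, smul_smul]
  have h0 := h.dotProduct_mulVec_nonneg v
  rw [star_eq_self, Matrix.sub_mulVec, dotProduct_sub, smul_mulVec, one_mulVec,
    dotProduct_smul, hAv, dotProduct_smul, smul_eq_mul, smul_eq_mul] at h0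
  have hsq : μ ^ 2 ≤ l * l := by
    nlinarith
  nlinarith

end SqrtPerturbAux

theorem sqrt_perturbation_bound {n : ℕ} (A₁ A₂ : Matrix (Fin n) (Fin n) ℝ)
    (h₁ : A₁.IsHermitian) (h₂ : A₂.IsHermitian)
    (μ₁ μ₂ : ℝ) (hμ₁ : 0 < μ₁) (hμ₂ : 0 < μ₂)
    (hA₁ : (A₁ - (μ₁ ^ 2) • (1 : Matrix (Fin n) (Fin n) ℝ)).PosSemidef)
    (hA₂ : (A₂ - (μ₂ ^ 2) • (1 : Matrix (Fin n) (Fin n) ℝ)).PosSemidef) :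
    ∃ (hp₁ : A₁.PosDef) (hp₂ : A₂.PosDef),
      (hp₁.posSemidef.sqrt - μ₁ • (1 : Matrix (Fin n) (Fin n) ℝ)).PosSemidef ∧
      (hp₂.posSemidef.sqrt - μ₂ • (1 : Matrix (Fin n) (Fin n) ℝ)).PosSemidef ∧
      specNorm (hp₂.posSemidef.sqrt - hp₁.posSemidef.sqrt) ≤
        specNorm (A₂ - A₁) / (μ₁ + μ₂) := by
  open SqrtPerturbAux in
  have hsmul : ∀ μ : ℝ, 0 < μ → ((μ ^ 2) • (1 : Matrix (Fin n) (Fin n) ℝ)).PosDef := by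
    intro μ hμ
    rw [smul_one_eq_diagonal]
    exact posDef_diagonal_iff.mpr fun i => by positivity
  have hp₁ : A₁.PosDef := by
    have := Matrix.PosDef.posSemidef_add hA₁ (hsmul μ₁ hμ₁)
    simpa using this
  have hp₂ : A₂.PosDef := by
    have := Matrix.PosDef.posSemidef_add hA₂ (hsmul μ₂ hμ₂)
    simpa using this
  have hs₁ : (hp₁.posSemidef.sqrt - μ₁ • (1 : Matrix (Fin n) (Fin n) ℝ)).PosSemidef :=
    SqrtPerturbAux.sqrt_ge hp₁ hμ₁.le hA₁
  have hs₂ : (hp₂.posSemidef.sqrt - μ₂ • (1 : Matrix (Fin n) (Fin n) ℝ)).PosSemidef :=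
    SqrtPerturbAux.sqrt_ge hp₂ hμ₂.le hA₂
  refine ⟨hp₁, hp₂, hs₁, hs₂, ?_⟩
  set S₁ := hp₁.posSemidef.sqrt with hS₁_def
  set S₂ := hp₂.posSemidef.sqrt with hS₂_def
  have hS₁ : S₁.PosSemidef := hp₁.posSemidef.posSemidef_sqrt
  have hS₂ : S₂.PosSemidef := hp₂.posSemidef.posSemidef_sqrt
  have hS₁sq : S₁ * S₁ = A₁ := by
    have := hp₁.posSemidef.sq_sqrt; rwa [pow_two] at this
  have hS₂sq : S₂ * S₂ = A₂ := by
    have := hp₂.posSemidef.sq_sqrt; rwa [pow_two] at this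
  have hXherm : (S₂ - S₁).IsHermitian := hS₂.1.sub hS₁.1
  have hDeq : A₂ - A₁ = S₂ * (S₂ - S₁) + (S₂ - S₁) * S₁ := by
    rw [Matrix.mul_sub, Matrix.sub_mul, hS₂sq, hS₁sq, sub_add_sub_cancel]
  have key : ∀ i, Real.sqrt ((Matrix.isHermitian_conjTranspose_mul_self (S₂ - S₁)).eigenvalues i) ≤
      specNorm (A₂ - A₁) / (μ₁ + μ₂) := by
    intro i
    obtain ⟨w, l, hw, hXw, habs⟩ := SqrtPerturbAux.exists_eigen (S₂ - S₁) hXherm i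
    have hb := SqrtPerturbAux.eigen_bound hXherm hDeq hμ₁.le hμ₂.le hs₁ hs₂ hw hXw
    rw [← habs, le_div_iff₀ (by positivity)]
    exact hb
  cases isEmpty_or_nonempty (Fin n) with
  | inl h =>
    rw [specNorm, Real.iSup_of_isEmpty]
    exact div_nonneg (SqrtPerturbAux.specNorm_nonneg _) (by positivity)
  | inr h => exact ciSup_le key
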